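/- Let q = 2^m ≥ 8 and k = q − 2. Then u ∈ 𝔽_q^q is a deep hole of TRS_{q-2}(𝔽_q, θ) if and only if u = u_f for some f(x) = w_0 x^{q-1} + w_1 x^{q-2} + g(x) with g ∈ S_{q-2,θ} and w_0, w_1 ∈ 𝔽_q satisfying: either w_0 = 0 and w_1 ≠ 0, or w_0 ≠ 0 and Tr(w_1 θ / w_0) = 1, where Tr : 𝔽_q → 𝔽_2 is the absolute trace map. -/

import Mathlib

open Polynomial Finset

/-- The set `S_{k,θ}` of twisted polynomials
`Σ_{i=0}^{k-2} f_i x^i + f_{k-1}(x^{k-1} + θ x^k)`. -/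
def Sset (F : Type*) [Field F] (k : ℕ) (θ : F) : Set (Polynomial F) :=
  {p | ∃ f : ℕ → F, p = (∑ i ∈ Finset.range (k - 1), Polynomial.C (f i) * Polynomial.X ^ i)
        + Polynomial.C (f (k - 1)) * (Polynomial.X ^ (k - 1) + Polynomial.C θ * Polynomial.X ^ k)}

/-- The twisted Reed–Solomon code `TRS_k(A, θ)` for the evaluation sequence `α`. -/
def TRS {F : Type*} [Field F] {n : ℕ} (α : Fin n → F) (k : ℕ) (θ : F) : Set (Fin n → F) :=
  {v | ∃ p ∈ Sset F k θ, v = fun j => p.eval (α j)}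

/-- The (Hamming) error distance `d(u, C)` from a word `u` to a code `C`. -/
noncomputable def distTo {F : Type*} [DecidableEq F] {n : ℕ} (u : Fin n → F)
    (C : Set (Fin n → F)) : ℕ :=
  sInf {d | ∃ c ∈ C, hammingDist u c = d}

/-- The covering radius `ρ(C) = max_u d(u, C)` of a code `C`. -/
noncomputable def covRad {F : Type*} [DecidableEq F] {n : ℕ} (C : Set (Fin n → F)) : ℕ :=
  sSup {d | ∃ u, distTo u C = d}

/-- `u` is a deep hole of `C` if `d(u, C) = ρ(C)`. -/
def IsDeepHole {F : Type*} [DecidableEq F] {n : ℕ} (C : Set (Fin n → F)) (u : Fin n → F) :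
    Prop :=
  distTo u C = covRad C

/-- The column vector `c_{r,θ}(a) = (1, a, …, a^{r-2}, a^{r-1} - θ a^r)ᵀ ∈ 𝔽_q^r`. -/
def crv (F : Type*) [Field F] (r : ℕ) (θ a : F) : Fin r → F :=
  fun i => if (i : ℕ) = r - 1 then a ^ (r - 1) - θ * a ^ r else a ^ (i : ℕ)

/-- The parity-check matrix `H` whose `j`-th column is `c_{r,θ}(α_j)`. -/
def Hmat {F : Type*} [Field F] {n : ℕ} (r : ℕ) (θ : F) (α : Fin n → F) :
    Matrix (Fin r) (Fin n) F :=
  Matrix.of fun i j => crv F r θ (α j) i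


theorem trace_frob {F : Type*} [Field F] [Fintype F] [Algebra (ZMod 2) F] [CharP F 2] (b : F) :
    Algebra.trace (ZMod 2) F (b ^ 2) = Algebra.trace (ZMod 2) F b := by
  haveI : Fact (Nat.Prime 2) := ⟨Nat.prime_two⟩
  haveI : ExpChar F 2 := ExpChar.prime Nat.prime_two
  let e : F ≃ₐ[ZMod 2] F := AlgEquiv.ofRingEquiv (f := frobeniusEquiv F 2)
    (fun x => by rw [frobeniusEquiv_def, ← map_pow, ZMod.pow_card])
  have := Algebra.trace_eq_of_algEquiv e b
  simpa [e, AlgEquiv.ofRingEquiv, frobeniusEquiv_def, frobenius_def] using this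

theorem AS_iff {F : Type*} [Field F] [Fintype F] [Algebra (ZMod 2) F] [CharP F 2] (c : F) :
    (∃ b : F, b ^ 2 + b = c) ↔ Algebra.trace (ZMod 2) F c = 0 := by
  haveI : Fact (Nat.Prime 2) := ⟨Nat.prime_two⟩
  have hz : ∀ z : ZMod 2, z = 0 ∨ z = 1 := by intro z; fin_cases z; exacts [Or.inl rfl, Or.inr rfl]
  have hforward : ∀ b : F, Algebra.trace (ZMod 2) F (b ^ 2 + b) = 0 := by
    intro b
    rw [map_add, trace_frob]
    exact CharTwo.add_self_eq_zero _
  let AS : F →ₗ[ZMod 2] F := AddMonoidHom.toZModLinearMap 2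
    { toFun := fun b => b ^ 2 + b
      map_zero' := by ring
      map_add' := fun x y => by
        show (x + y) ^ 2 + (x + y) = x ^ 2 + x + (y ^ 2 + y)
        rw [add_pow_char]
        ring }
  have hAS : ∀ b : F, AS b = b ^ 2 + b := fun b => rfl
  let TrL : F →ₗ[ZMod 2] ZMod 2 := Algebra.trace (ZMod 2) F
  have hker : LinearMap.ker AS = Submodule.span (ZMod 2) {(1 : F)} := by
    ext b
    rw [LinearMap.mem_ker, hAS, Submodule.mem_span_singleton]
    constructor
    · intro h
      have h2 : b * (b + 1) = 0 := by linear_combination h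
      rcases mul_eq_zero.mp h2 with h3 | h3
      · exact ⟨0, by simp [h3]⟩
      · refine ⟨1, ?_⟩
        have := eq_neg_of_add_eq_zero_left h3
        rw [CharTwo.neg_eq] at this
        simp [this]
    · rintro ⟨a, rfl⟩
      rcases hz a with rfl | rfl
      · simp
      · simpa using CharTwo.add_self_eq_zero (1 : F)
  have hrangeTr : LinearMap.range TrL = ⊤ :=
    LinearMap.range_eq_top.mpr (Algebra.trace_surjective (ZMod 2) F)
  have h1 := LinearMap.finrank_range_add_finrank_ker AS
  have h2 := LinearMap.finrank_range_add_finrank_ker TrL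
  have hk1 : Module.finrank (ZMod 2) (LinearMap.ker AS) = 1 := by
    rw [hker]; exact finrank_span_singleton one_ne_zero
  have hr1 : Module.finrank (ZMod 2) (LinearMap.range TrL) = 1 := by
    rw [hrangeTr, finrank_top, Module.finrank_self]
  have hle : LinearMap.range AS ≤ LinearMap.ker TrL := by
    rintro _ ⟨b, rfl⟩
    exact hforward b
  have heq : LinearMap.range AS = LinearMap.ker TrL :=
    Submodule.eq_of_le_of_finrank_le hle (by omega)
  constructor
  · rintro ⟨b, rfl⟩; exact hforward b
  · intro hc
    have : c ∈ LinearMap.range AS := heq ▸ (LinearMap.mem_ker.mpr hc)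
    obtain ⟨b, hb⟩ := this
    exact ⟨b, hb⟩


theorem PS_eval {F : Type*} [Field F] [Fintype F] [DecidableEq F] [CharP F 2] (q : ℕ)
    (hq : q = Fintype.card F) (hq8 : 8 ≤ q) (i : ℕ) (hi : i < q + 2) :
    ∑ a : F, a ^ i = if i = q - 1 then 1 else 0 := by
  haveI : ExpChar F 2 := ExpChar.prime Nat.prime_two
  subst hq
  set q := Fintype.card F with hq
  have hsum1 : ∑ a : F, a = 0 := by
    have := FiniteField.sum_pow_lt_card_sub_one F 1 (by omega)
    simpa using this
  by_cases h1 : i < q - 1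
  · rw [FiniteField.sum_pow_lt_card_sub_one F i h1, if_neg (by omega)]
  by_cases h2 : i = q - 1
  · subst h2
    rw [if_pos rfl, ← Finset.add_sum_erase univ _ (Finset.mem_univ (0 : F)),
      zero_pow (by omega : q - 1 ≠ 0), zero_add,
      Finset.sum_congr rfl (fun a ha => FiniteField.pow_card_sub_one_eq_one a
        (Finset.mem_erase.mp ha).1)]
    rw [Finset.sum_const, Finset.card_erase_of_mem (Finset.mem_univ _), Finset.card_univ,
      nsmul_eq_mul, mul_one, Nat.cast_sub (by omega), Nat.cast_one,
      FiniteField.cast_card_eq_zero, zero_sub, CharTwo.neg_eq]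
  by_cases h3 : i = q
  · subst h3
    rw [if_neg (by omega), Finset.sum_congr rfl (fun a _ => FiniteField.pow_card a)]
    exact hsum1
  · have h4 : i = q + 1 := by omega
    subst h4
    rw [if_neg (by omega)]
    have : ∀ a : F, a ^ (q + 1) = a ^ 2 := by
      intro a
      rw [pow_succ, FiniteField.pow_card, sq]
    rw [Finset.sum_congr rfl (fun a _ => this a),
      ← CharTwo.sum_sq univ (fun a : F => a), hsum1]
    ring

theorem evalsum {F : Type*} [Field F] [Fintype F] [DecidableEq F] [CharP F 2] (q : ℕ)
    (hq : q = Fintype.card F) (hq8 : 8 ≤ q) (r : F[X]) (hr : r.natDegree < q + 2) :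
    ∑ a : F, r.eval a = r.coeff (q - 1) := by
  have hrepr := r.as_sum_range' (q + 2) hr
  calc ∑ a : F, r.eval a = ∑ a : F, ∑ i ∈ range (q + 2), r.coeff i * a ^ i := by
        refine Finset.sum_congr rfl fun a _ => ?_
        conv_lhs => rw [hrepr]
        simp [eval_finset_sum]
    _ = ∑ i ∈ range (q + 2), ∑ a : F, r.coeff i * a ^ i := Finset.sum_comm
    _ = ∑ i ∈ range (q + 2), r.coeff i * ∑ a : F, a ^ i := by
        simp [Finset.mul_sum]
    _ = ∑ i ∈ range (q + 2), if i = q - 1 then r.coeff i else 0 := by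
        refine Finset.sum_congr rfl fun i hi => ?_
        rw [PS_eval q hq hq8 i (Finset.mem_range.mp hi)]
        simp [mul_ite]
    _ = r.coeff (q - 1) := by
        rw [Finset.sum_ite_eq' (range (q + 2)) (q - 1) (fun i => r.coeff i),
          if_pos (Finset.mem_range.mpr (by omega))]

theorem synd0 {F : Type*} [Field F] [Fintype F] [DecidableEq F] [CharP F 2] (q : ℕ)
    (hq : q = Fintype.card F) (hq8 : 8 ≤ q) (p : F[X]) (hp : p.natDegree < q) :
    ∑ a : F, p.eval a = p.coeff (q - 1) :=
  evalsum q hq hq8 p (by omega)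

theorem synd1 {F : Type*} [Field F] [Fintype F] [DecidableEq F] [CharP F 2] (q : ℕ)
    (hq : q = Fintype.card F) (hq8 : 8 ≤ q) (θ : F) (p : F[X]) (hp : p.natDegree < q) :
    ∑ a : F, p.eval a * (a + θ * a ^ 2) = p.coeff (q - 2) + θ * p.coeff (q - 3) := by
  have hdeg : (p * (X + C θ * X ^ 2)).natDegree < q + 2 := by
    refine lt_of_le_of_lt (natDegree_mul_le) ?_
    have h2 : (X + C θ * X ^ 2 : F[X]).natDegree ≤ 2 := by
      refine le_trans (natDegree_add_le _ _) ?_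
      simp [natDegree_X, natDegree_C_mul_le]
      refine le_trans (natDegree_C_mul_le _ _) ?_
      simp [natDegree_X_pow]
    omega
  have key := evalsum q hq hq8 (p * (X + C θ * X ^ 2)) hdeg
  have hlhs : ∑ a : F, (p * (X + C θ * X ^ 2)).eval a = ∑ a : F, p.eval a * (a + θ * a ^ 2) := by
    refine Finset.sum_congr rfl fun a _ => ?_
    simp
  have c1 : (p * X).coeff (q - 1) = p.coeff (q - 2) := by
    rw [show q - 1 = (q - 2) + 1 by omega, coeff_mul_X]
  have c2 : (p * (C θ * X ^ 2)).coeff (q - 1) = θ * p.coeff (q - 3) := by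
    rw [show p * (C θ * X ^ 2) = C θ * (p * X ^ 2) from by ring, coeff_C_mul,
      show q - 1 = (q - 3) + 2 by omega, coeff_mul_X_pow]
  rw [← hlhs, key, mul_add, coeff_add, c1, c2]

theorem Sset_natDegree {F : Type*} [Field F] (q : ℕ) (hq8 : 8 ≤ q) (θ : F) (p : F[X])
    (hp : p ∈ Sset F (q - 2) θ) : p.natDegree ≤ q - 2 := by
  obtain ⟨f, rfl⟩ := hp
  refine le_trans (natDegree_add_le _ _) (max_le ?_ ?_)
  · refine Polynomial.natDegree_sum_le_of_forall_le _ _ fun i hi => ?_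
    refine le_trans (natDegree_C_mul_le _ _) ?_
    rw [natDegree_X_pow]
    have := Finset.mem_range.mp hi
    omega
  · refine le_trans (natDegree_C_mul_le _ _) ?_
    refine le_trans (natDegree_add_le _ _) (max_le ?_ ?_)
    · rw [natDegree_X_pow]; omega
    · refine le_trans (natDegree_C_mul_le _ _) ?_
      rw [natDegree_X_pow]

theorem Sset_coeff {F : Type*} [Field F] (q : ℕ) (hq8 : 8 ≤ q) (θ : F) (p : F[X])
    (hp : p ∈ Sset F (q - 2) θ) :
    p.coeff (q - 1) = 0 ∧ p.coeff (q - 2) = θ * p.coeff (q - 3) := by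
  obtain ⟨f, rfl⟩ := hp
  have hsum : ∀ n, q - 3 ≤ n → (∑ i ∈ Finset.range (q - 2 - 1), C (f i) * X ^ i).coeff n = 0 := by
    intro n hn
    rw [finset_sum_coeff]
    refine Finset.sum_eq_zero fun i hi => ?_
    have hi' := Finset.mem_range.mp hi
    rw [coeff_C_mul, coeff_X_pow, if_neg (by omega), mul_zero]
  have h2 : ∀ n, (C (f (q - 2 - 1)) * (X ^ (q - 2 - 1) + C θ * X ^ (q - 2))).coeff n
      = f (q - 2 - 1) * ((if n = q - 2 - 1 then (1:F) else 0) + θ * (if n = q - 2 then 1 else 0)) := by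
    intro n
    rw [coeff_C_mul, coeff_add, coeff_X_pow, coeff_C_mul, coeff_X_pow]
  constructor
  · rw [coeff_add, hsum _ (by omega), h2, if_neg (by omega), if_neg (by omega)]
    ring
  · rw [coeff_add, coeff_add, hsum _ (by omega), hsum _ (by omega), h2, h2,
      if_neg (by omega), if_pos rfl, if_pos (by omega), if_neg (by omega)]
    ring

theorem mem_Sset_of {F : Type*} [Field F] (q : ℕ) (hq8 : 8 ≤ q) (θ : F) (p : F[X])
    (hdeg : p.natDegree < q) (h1 : p.coeff (q - 1) = 0)
    (h2 : p.coeff (q - 2) = θ * p.coeff (q - 3)) : p ∈ Sset F (q - 2) θ := by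
  obtain ⟨t, rfl⟩ : ∃ t, q = t + 3 := ⟨q - 3, by omega⟩
  refine ⟨fun i => p.coeff i, ?_⟩
  have e1 : t + 3 - 2 - 1 = t := by omega
  have e2 : t + 3 - 2 = t + 1 := by omega
  rw [e1, e2]
  have h1' : p.coeff (t + 2) = 0 := by rw [show t + 2 = t + 3 - 1 by omega]; exact h1
  have h2' : p.coeff (t + 1) = θ * p.coeff t := by
    rw [show t + 1 = t + 3 - 2 by omega, show t = t + 3 - 3 by omega]; exact h2
  have hrepr := p.as_sum_range' (t + 3) hdeg
  conv_lhs => rw [hrepr]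
  rw [Finset.sum_range_succ, Finset.sum_range_succ, Finset.sum_range_succ, h1', h2',
    monomial_zero_right, add_zero]
  rw [Finset.sum_congr rfl (fun i _ => (C_mul_X_pow_eq_monomial).symm :
    ∀ i ∈ Finset.range t, (monomial i (p.coeff i) : F[X]) = C (p.coeff i) * X ^ i)]
  rw [← C_mul_X_pow_eq_monomial, ← C_mul_X_pow_eq_monomial, map_mul]
  ring

theorem mem_TRS_iff {F : Type*} [Field F] [Fintype F] [DecidableEq F] [CharP F 2] (q : ℕ)
    (hq : q = Fintype.card F) (hq8 : 8 ≤ q) (θ : F) (α : Fin q → F)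
    (hα : Function.Bijective α) (v : Fin q → F) :
    v ∈ TRS α (q - 2) θ ↔
      (∑ j, v j = 0 ∧ ∑ j, v j * (α j + θ * (α j) ^ 2) = 0) := by
  constructor
  · rintro ⟨p, hp, rfl⟩
    have hdeg : p.natDegree < q := lt_of_le_of_lt (Sset_natDegree q hq8 θ p hp) (by omega)
    obtain ⟨hc1, hc2⟩ := Sset_coeff q hq8 θ p hp
    have e0 := Fintype.sum_bijective α hα (fun j => p.eval (α j)) (fun a => p.eval a)
      (fun j => rfl)
    have e1 := Fintype.sum_bijective α hα (fun j => p.eval (α j) * (α j + θ * (α j) ^ 2))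
      (fun a => p.eval a * (a + θ * a ^ 2)) (fun j => rfl)
    constructor
    · show ∑ j, p.eval (α j) = 0
      rw [e0, synd0 q hq hq8 p hdeg, hc1]
    · show ∑ j, p.eval (α j) * (α j + θ * (α j) ^ 2) = 0
      rw [e1, synd1 q hq hq8 θ p hdeg, hc2]
      exact CharTwo.add_self_eq_zero _
  · rintro ⟨h0, h1⟩
    set p := Lagrange.interpolate Finset.univ α v with hpdef
    have hinj : Set.InjOn α (Finset.univ : Finset (Fin q)) := hα.injective.injOn
    have hval : ∀ j, v j = p.eval (α j) := fun j =>
      (Lagrange.eval_interpolate_at_node (v := α) v hinj (Finset.mem_univ j)).symm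
    have hdeg : p.natDegree < q := by
      rcases eq_or_ne p 0 with h | h
      · rw [h, natDegree_zero]; omega
      · rw [natDegree_lt_iff_degree_lt h]
        have := Lagrange.degree_interpolate_lt (r := v) hinj
        simpa [hpdef] using this
    have e0 := Fintype.sum_bijective α hα (fun j => v j) (fun a => p.eval a)
      (fun j => hval j)
    have e1 := Fintype.sum_bijective α hα (fun j => v j * (α j + θ * (α j) ^ 2))
      (fun a => p.eval a * (a + θ * a ^ 2)) (fun j => by show v j * (α j + θ * (α j) ^ 2) = _; rw [hval j])
    have hs0 : p.coeff (q - 1) = 0 := by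
      rw [← synd0 q hq hq8 p hdeg, ← e0]
      exact h0
    have hs1 : p.coeff (q - 2) + θ * p.coeff (q - 3) = 0 := by
      rw [← synd1 q hq hq8 θ p hdeg, ← e1]
      exact h1
    have hs1' : p.coeff (q - 2) = θ * p.coeff (q - 3) := by
      have := add_eq_zero_iff_eq_neg.mp hs1
      rwa [CharTwo.neg_eq] at this
    exact ⟨p, mem_Sset_of q hq8 θ p hdeg hs0 hs1', funext hval⟩

theorem distTo_le_iff {F : Type*} [Field F] [DecidableEq F] {n : ℕ}
    (S0 S1 : (Fin n → F) →ₗ[F] F) (C : Set (Fin n → F))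
    (hC : ∀ v, v ∈ C ↔ S0 v = 0 ∧ S1 v = 0) (u : Fin n → F) (n₀ : ℕ) :
    distTo u C ≤ n₀ ↔ ∃ e : Fin n → F, S0 e = S0 u ∧ S1 e = S1 u ∧ hammingDist e 0 ≤ n₀ := by
  have hzero : (0 : Fin n → F) ∈ C := (hC 0).mpr (by simp)
  have hne : {d | ∃ c ∈ C, hammingDist u c = d}.Nonempty := ⟨_, 0, hzero, rfl⟩
  constructor
  · intro h
    obtain ⟨c, hc, hd⟩ := Nat.sInf_mem hne
    refine ⟨u - c, ?_, ?_, ?_⟩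
    · rw [map_sub, ((hC c).mp hc).1, sub_zero]
    · rw [map_sub, ((hC c).mp hc).2, sub_zero]
    · rw [hammingDist_zero_right, sub_eq_neg_add, ← hammingDist_eq_hammingNorm, hammingDist_comm, hd]
      exact h
  · rintro ⟨e, h0, h1, hw⟩
    have hc : u - e ∈ C := (hC _).mpr ⟨by rw [map_sub, h0, sub_self],
      by rw [map_sub, h1, sub_self]⟩
    have hde : hammingDist u (u - e) = hammingDist e 0 := by
      rw [hammingDist_comm, hammingDist_eq_hammingNorm, hammingDist_zero_right, neg_sub, sub_add_cancel]
    exact le_trans (Nat.sInf_le ⟨u - e, hc, rfl⟩) (hde ▸ hw)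

theorem wt1_iff {F : Type*} [Field F] [Fintype F] [DecidableEq F] {q : ℕ} (θ : F)
    (α : Fin q → F) (hα : Function.Bijective α) (w₀ w₁ : F) :
    (∃ e : Fin q → F, (∑ j, e j) = w₀ ∧ (∑ j, e j * (α j + θ * (α j) ^ 2)) = w₁ ∧
        hammingDist e 0 ≤ 1) ↔
      ((w₀ = 0 ∧ w₁ = 0) ∨ (w₀ ≠ 0 ∧ ∃ a : F, w₁ = w₀ * (a + θ * a ^ 2))) := by
  constructor
  · rintro ⟨e, he0, he1, hw⟩
    have hw' : (Finset.filter (fun j => e j ≠ 0) Finset.univ).card ≤ 1 := by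
      rw [hammingDist_zero_right] at hw
      exact hw
    have hcard := Finset.card_le_one.mp hw'
    by_cases he : e = 0
    · subst he
      left
      constructor
      · rw [← he0]; simp
      · rw [← he1]; simp
    · obtain ⟨j₀, hj₀⟩ := Function.ne_iff.mp he
      simp only [Pi.zero_apply] at hj₀
      have huniq : ∀ j, j ≠ j₀ → e j = 0 := by
        intro j hj
        by_contra hej
        exact hj (hcard j (Finset.mem_filter.mpr ⟨Finset.mem_univ _, hej⟩)
          j₀ (Finset.mem_filter.mpr ⟨Finset.mem_univ _, hj₀⟩))
      have hsum0 : (∑ j, e j) = e j₀ :=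
        Finset.sum_eq_single j₀ (fun b _ hb => huniq b hb) (fun h => absurd (Finset.mem_univ j₀) h)
      have hsum1 : (∑ j, e j * (α j + θ * (α j) ^ 2)) = e j₀ * (α j₀ + θ * (α j₀) ^ 2) :=
        Finset.sum_eq_single j₀ (fun b _ hb => by rw [huniq b hb, zero_mul])
          (fun h => absurd (Finset.mem_univ j₀) h)
      right
      refine ⟨by rw [← he0, hsum0]; exact hj₀, ⟨α j₀, ?_⟩⟩
      rw [← he1, hsum1, ← he0, hsum0]
  · rintro (⟨rfl, rfl⟩ | ⟨hw0, a, rfl⟩)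
    · exact ⟨0, by simp, by simp, by simp⟩
    · refine ⟨fun j => if α j = a then w₀ else 0, ?_, ?_, ?_⟩
      · rw [Fintype.sum_bijective α hα _ (fun b => if b = a then w₀ else 0) (fun j => rfl),
          Finset.sum_ite_eq' Finset.univ a (fun _ => w₀), if_pos (Finset.mem_univ a)]
      · rw [Fintype.sum_bijective α hα _
          (fun b => (if b = a then w₀ else 0) * (b + θ * b ^ 2)) (fun j => rfl)]
        have : ∀ b : F, (if b = a then w₀ else 0) * (b + θ * b ^ 2)
            = if b = a then w₀ * (b + θ * b ^ 2) else 0 := by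
          intro b; split_ifs <;> simp
        rw [Finset.sum_congr rfl (fun b _ => this b),
          Finset.sum_ite_eq' Finset.univ a (fun b => w₀ * (b + θ * b ^ 2)),
          if_pos (Finset.mem_univ a)]
      · rw [hammingDist_zero_right]
        show (Finset.filter _ Finset.univ).card ≤ 1
        refine Finset.card_le_one.mpr ?_
        intro i hi j hj
        simp only [Finset.mem_filter, ne_eq, ite_eq_right_iff, not_forall] at hi hj
        exact hα.injective (hi.2.choose.trans hj.2.choose.symm)

theorem wt2_exists {F : Type*} [Field F] [Fintype F] [DecidableEq F] (q : ℕ)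
    (hq : q = Fintype.card F) (hq8 : 8 ≤ q) (θ : F) (hθ : θ ≠ 0)
    (α : Fin q → F) (hα : Function.Bijective α) (w₀ w₁ : F) :
    ∃ e : Fin q → F, (∑ j, e j) = w₀ ∧ (∑ j, e j * (α j + θ * (α j) ^ 2)) = w₁ ∧
      hammingDist e 0 ≤ 2 := by
  obtain ⟨a₁, ha₁⟩ : ∃ a : F, a ∉ ({0, -θ⁻¹} : Finset F) := by
    by_contra h
    push_neg at h
    have hsub : (Finset.univ : Finset F) ⊆ {0, -θ⁻¹} := fun x _ => h x
    have := Finset.card_le_card hsub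
    rw [Finset.card_univ, ← hq] at this
    have h2 : ({0, -θ⁻¹} : Finset F).card ≤ 2 :=
      le_trans (Finset.card_insert_le _ _) (by simp)
    omega
  simp only [Finset.mem_insert, Finset.mem_singleton, not_or] at ha₁
  obtain ⟨ha10, ha1i⟩ := ha₁
  set t := a₁ + θ * a₁ ^ 2 with hts
  have ht : t ≠ 0 := by
    rw [hts, show a₁ + θ * a₁ ^ 2 = a₁ * (1 + θ * a₁) from by ring]
    refine mul_ne_zero ha10 ?_
    intro h
    apply ha1i
    field_simp
    linear_combination h
  refine ⟨fun j => if α j = a₁ then w₁ / t else if α j = 0 then w₀ - w₁ / t else 0, ?_, ?_, ?_⟩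
  · rw [Fintype.sum_bijective α hα _
      (fun b => if b = a₁ then w₁ / t else if b = 0 then w₀ - w₁ / t else 0) (fun j => rfl)]
    have : ∀ b : F, (if b = a₁ then w₁ / t else if b = 0 then w₀ - w₁ / t else 0)
        = (if b = a₁ then w₁ / t else 0) + (if b = 0 then w₀ - w₁ / t else 0) := by
      intro b
      rcases eq_or_ne b a₁ with rfl | h1
      · rw [if_pos rfl, if_pos rfl, if_neg ha10, add_zero]
      · rw [if_neg h1, if_neg h1, zero_add]
    rw [Finset.sum_congr rfl (fun b _ => this b), Finset.sum_add_distrib,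
      Finset.sum_ite_eq' Finset.univ a₁ (fun _ => w₁ / t),
      Finset.sum_ite_eq' Finset.univ (0 : F) (fun _ => w₀ - w₁ / t),
      if_pos (Finset.mem_univ _), if_pos (Finset.mem_univ _)]
    ring
  · rw [Fintype.sum_bijective α hα _
      (fun b => (if b = a₁ then w₁ / t else if b = 0 then w₀ - w₁ / t else 0) * (b + θ * b ^ 2))
      (fun j => rfl)]
    have : ∀ b : F, (if b = a₁ then w₁ / t else if b = 0 then w₀ - w₁ / t else 0) * (b + θ * b ^ 2)
        = if b = a₁ then (w₁ / t) * (b + θ * b ^ 2) else 0 := by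
      intro b
      rcases eq_or_ne b a₁ with rfl | h1
      · rw [if_pos rfl, if_pos rfl]
      · rw [if_neg h1, if_neg h1]
        rcases eq_or_ne b 0 with rfl | h2
        · rw [if_pos rfl]; ring
        · rw [if_neg h2, zero_mul]
    rw [Finset.sum_congr rfl (fun b _ => this b),
      Finset.sum_ite_eq' Finset.univ a₁ (fun b => (w₁ / t) * (b + θ * b ^ 2)),
      if_pos (Finset.mem_univ _), ← hts, div_mul_cancel₀ w₁ ht]
  · rw [hammingDist_zero_right]
    obtain ⟨j₁, hj₁⟩ := hα.surjective a₁
    obtain ⟨j₂, hj₂⟩ := hα.surjective 0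
    show (Finset.filter _ Finset.univ).card ≤ 2
    refine le_trans (Finset.card_le_card ?_) (le_trans (Finset.card_insert_le j₁ {j₂}) (by simp))
    intro j hj
    simp only [Finset.mem_filter, ne_eq] at hj
    simp only [Finset.mem_insert, Finset.mem_singleton]
    rcases eq_or_ne (α j) a₁ with h1 | h1
    · exact Or.inl (hα.injective (h1.trans hj₁.symm))
    · rcases eq_or_ne (α j) 0 with h2 | h2
      · exact Or.inr (hα.injective (h2.trans hj₂.symm))
      · exfalso; apply hj.2; rw [if_neg h1, if_neg h2]

theorem cover_iff_trace {F : Type*} [Field F] [Fintype F] [Algebra (ZMod 2) F] [CharP F 2]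
    (θ : F) (hθ : θ ≠ 0) (w₀ w₁ : F) (hw0 : w₀ ≠ 0) :
    (∃ a : F, w₁ = w₀ * (a + θ * a ^ 2)) ↔
      Algebra.trace (ZMod 2) F (w₁ * θ / w₀) = 0 := by
  rw [← AS_iff]
  constructor
  · rintro ⟨a, rfl⟩
    refine ⟨θ * a, ?_⟩
    field_simp
    ring
  · rintro ⟨b, hb⟩
    refine ⟨b / θ, ?_⟩
    have h : (b ^ 2 + b) * w₀ = w₁ * θ := by
      rw [hb]; field_simp
    field_simp
    linear_combination -h

/-- Let `q = 2^m ≥ 8` and `k = q - 2`. Then `u ∈ 𝔽_q^q` is a deep hole of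
`TRS_{q-2}(𝔽_q, θ)` iff `u = u_f` for some `f(x) = w_0 x^{q-1} + w_1 x^{q-2} + g(x)` with
`g ∈ S_{q-2,θ}` and either `w_0 = 0 ∧ w_1 ≠ 0`, or `w_0 ≠ 0` and `Tr(w_1 θ / w_0) = 1`,
where `Tr : 𝔽_q → 𝔽_2` is the absolute trace. -/
theorem deep_holes_char_two_k_eq_q_sub_two {F : Type*} [Field F] [Fintype F] [DecidableEq F]
    [Algebra (ZMod 2) F] (q m : ℕ) (hq : q = Fintype.card F) (hqm : q = 2 ^ m) (hq8 : 8 ≤ q)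
    (θ : F) (hθ : θ ≠ 0) (α : Fin q → F) (hα : Function.Bijective α) (u : Fin q → F) :
    IsDeepHole (TRS α (q - 2) θ) u ↔
      ∃ w₀ w₁ : F, ∃ g ∈ Sset F (q - 2) θ,
        (u = fun j => (Polynomial.C w₀ * Polynomial.X ^ (q - 1)
            + Polynomial.C w₁ * Polynomial.X ^ (q - 2) + g).eval (α j)) ∧
        ((w₀ = 0 ∧ w₁ ≠ 0) ∨
          (w₀ ≠ 0 ∧ Algebra.trace (ZMod 2) F (w₁ * θ / w₀) = 1)) := by
  haveI hchar : CharP F 2 := charP_of_injective_algebraMap (algebraMap (ZMod 2) F).injective 2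
  have hz2 : ∀ z : ZMod 2, z ≠ 0 ↔ z = 1 := by decide
  set Code := TRS α (q - 2) θ with hCode
  let S0 : (Fin q → F) →ₗ[F] F :=
    { toFun := fun v => ∑ j, v j
      map_add' := fun x y => by simp [Finset.sum_add_distrib]
      map_smul' := fun c x => by simp [Finset.mul_sum] }
  let S1 : (Fin q → F) →ₗ[F] F :=
    { toFun := fun v => ∑ j, v j * (α j + θ * (α j) ^ 2)
      map_add' := fun x y => by simp [add_mul, Finset.sum_add_distrib]
      map_smul' := fun c x => by simp [Finset.mul_sum, mul_assoc] }
  have hmem : ∀ v : Fin q → F, v ∈ Code ↔ S0 v = 0 ∧ S1 v = 0 := fun v =>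
    mem_TRS_iff q hq hq8 θ α hα v
  have hle : ∀ (u' : Fin q → F) (n₀ : ℕ), distTo u' Code ≤ n₀ ↔
      ∃ e, S0 e = S0 u' ∧ S1 e = S1 u' ∧ hammingDist e 0 ≤ n₀ :=
    fun u' n₀ => distTo_le_iff S0 S1 Code hmem u' n₀
  have hle2 : ∀ u' : Fin q → F, distTo u' Code ≤ 2 := by
    intro u'
    rw [hle]
    obtain ⟨e, h0, h1, h2⟩ := wt2_exists q hq hq8 θ hθ α hα (S0 u') (S1 u')
    exact ⟨e, h0, h1, h2⟩
  have hle1 : ∀ u' : Fin q → F, distTo u' Code ≤ 1 ↔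
      ((S0 u' = 0 ∧ S1 u' = 0) ∨ (S0 u' ≠ 0 ∧ ∃ a : F, S1 u' = S0 u' * (a + θ * a ^ 2))) := by
    intro u'
    rw [hle]
    exact wt1_iff θ α hα (S0 u') (S1 u')
  have hsynd : ∀ p : F[X], p.natDegree < q →
      S0 (fun j => p.eval (α j)) = p.coeff (q - 1) ∧
      S1 (fun j => p.eval (α j)) = p.coeff (q - 2) + θ * p.coeff (q - 3) := by
    intro p hp
    have e0 := Fintype.sum_bijective α hα (fun j => p.eval (α j)) (fun a => p.eval a)
      (fun j => rfl)
    have e1 := Fintype.sum_bijective α hα (fun j => p.eval (α j) * (α j + θ * (α j) ^ 2))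
      (fun a => p.eval a * (a + θ * a ^ 2)) (fun j => rfl)
    constructor
    · show (∑ j, p.eval (α j)) = _
      rw [e0]
      exact synd0 q hq hq8 p hp
    · show (∑ j, p.eval (α j) * (α j + θ * (α j) ^ 2)) = _
      rw [e1]
      exact synd1 q hq hq8 θ p hp
  have hw : distTo (fun j => ((X : F[X]) ^ (q - 2)).eval (α j)) Code = 2 := by
    obtain ⟨hs0, hs1⟩ := hsynd (X ^ (q - 2)) (by rw [natDegree_X_pow]; omega)
    rw [coeff_X_pow, if_neg (by omega)] at hs0
    rw [coeff_X_pow, coeff_X_pow, if_pos rfl, if_neg (by omega), mul_zero, add_zero] at hs1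
    have h2 : ¬ distTo (fun j => ((X : F[X]) ^ (q - 2)).eval (α j)) Code ≤ 1 := by
      rw [hle1]
      rintro (⟨-, h'⟩ | ⟨h, -⟩)
      · rw [hs1] at h'; exact one_ne_zero h'
      · exact h hs0
    have h3 := hle2 (fun j => ((X : F[X]) ^ (q - 2)).eval (α j))
    omega
  have hcov : covRad Code = 2 := by
    apply le_antisymm
    · refine csSup_le ⟨2, _, hw⟩ ?_
      rintro d ⟨u', rfl⟩
      exact hle2 u'
    · exact le_csSup ⟨2, fun d hd => by obtain ⟨u', rfl⟩ := hd; exact hle2 u'⟩ ⟨_, hw⟩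
  have hdh : IsDeepHole Code u ↔ distTo u Code = 2 := by
    rw [show IsDeepHole Code u = (distTo u Code = covRad Code) from rfl, hcov]
  rw [hdh]
  have hQ : distTo u Code = 2 ↔ ¬ ((S0 u = 0 ∧ S1 u = 0) ∨
      (S0 u ≠ 0 ∧ ∃ a : F, S1 u = S0 u * (a + θ * a ^ 2))) := by
    rw [← hle1]
    have := hle2 u
    omega
  rw [hQ]
  constructor
  · intro hnc
    set w₀ := S0 u with hw₀
    set w₁ := S1 u with hw₁
    set h : F[X] := Polynomial.C w₀ * X ^ (q - 1) + Polynomial.C w₁ * X ^ (q - 2) with hh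
    have hdegh : h.natDegree < q := by
      refine lt_of_le_of_lt (natDegree_add_le _ _) ?_
      rw [max_lt_iff]
      constructor
      · exact lt_of_le_of_lt (natDegree_C_mul_le _ _) (by rw [natDegree_X_pow]; omega)
      · exact lt_of_le_of_lt (natDegree_C_mul_le _ _) (by rw [natDegree_X_pow]; omega)
    have hc1 : h.coeff (q - 1) = w₀ := by
      rw [hh, coeff_add, coeff_C_mul, coeff_C_mul, coeff_X_pow, coeff_X_pow,
        if_pos rfl, if_neg (by omega)]
      ring
    have hc2 : h.coeff (q - 2) = w₁ := by
      rw [hh, coeff_add, coeff_C_mul, coeff_C_mul, coeff_X_pow, coeff_X_pow,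
        if_neg (by omega), if_pos rfl]
      ring
    have hc3 : h.coeff (q - 3) = 0 := by
      rw [hh, coeff_add, coeff_C_mul, coeff_C_mul, coeff_X_pow, coeff_X_pow,
        if_neg (by omega), if_neg (by omega)]
      ring
    obtain ⟨hh0, hh1⟩ := hsynd h hdegh
    rw [hc1] at hh0
    rw [hc2, hc3, mul_zero, add_zero] at hh1
    have hv0 : S0 (u - fun j => h.eval (α j)) = 0 := by
      rw [map_sub, hh0, ← hw₀, sub_self]
    have hv1 : S1 (u - fun j => h.eval (α j)) = 0 := by
      rw [map_sub, hh1, ← hw₁, sub_self]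
    obtain ⟨g, hg, hveq⟩ := (hmem _).mpr ⟨hv0, hv1⟩
    refine ⟨w₀, w₁, g, hg, ?_, ?_⟩
    · funext j
      have hgj : g.eval (α j) = u j - h.eval (α j) := by
        have := congrFun hveq j
        simp only [Pi.sub_apply] at this
        exact this.symm
      rw [eval_add, hgj]
      ring
    · by_cases hw0 : w₀ = 0
      · exact Or.inl ⟨hw0, fun h1 => hnc (Or.inl ⟨hw0, h1⟩)⟩
      · refine Or.inr ⟨hw0, ?_⟩
        have hnex : ¬ ∃ a : F, w₁ = w₀ * (a + θ * a ^ 2) :=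
          fun hex => hnc (Or.inr ⟨hw0, hex⟩)
        rw [cover_iff_trace θ hθ w₀ w₁ hw0] at hnex
        exact (hz2 _).mp hnex
  · rintro ⟨w₀, w₁, g, hg, hu, hcond⟩
    have hdegg := Sset_natDegree q hq8 θ g hg
    obtain ⟨hgc1, hgc2⟩ := Sset_coeff q hq8 θ g hg
    set f : F[X] := Polynomial.C w₀ * X ^ (q - 1) + Polynomial.C w₁ * X ^ (q - 2) + g with hf
    have hdegf : f.natDegree < q := by
      refine lt_of_le_of_lt (natDegree_add_le _ _) ?_
      rw [max_lt_iff]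
      refine ⟨lt_of_le_of_lt (natDegree_add_le _ _) ?_, by omega⟩
      rw [max_lt_iff]
      constructor
      · exact lt_of_le_of_lt (natDegree_C_mul_le _ _) (by rw [natDegree_X_pow]; omega)
      · exact lt_of_le_of_lt (natDegree_C_mul_le _ _) (by rw [natDegree_X_pow]; omega)
    have hfc1 : f.coeff (q - 1) = w₀ := by
      rw [hf, coeff_add, coeff_add, coeff_C_mul, coeff_C_mul, coeff_X_pow, coeff_X_pow,
        if_pos rfl, if_neg (by omega), hgc1]
      ring
    have hfc2 : f.coeff (q - 2) = w₁ + θ * g.coeff (q - 3) := by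
      rw [hf, coeff_add, coeff_add, coeff_C_mul, coeff_C_mul, coeff_X_pow, coeff_X_pow,
        if_neg (by omega), if_pos rfl, hgc2]
      ring
    have hfc3 : f.coeff (q - 3) = g.coeff (q - 3) := by
      rw [hf, coeff_add, coeff_add, coeff_C_mul, coeff_C_mul, coeff_X_pow, coeff_X_pow,
        if_neg (by omega), if_neg (by omega)]
      ring
    obtain ⟨hf0, hf1⟩ := hsynd f hdegf
    have hS0u : S0 u = w₀ := by rw [hu, hf0, hfc1]
    have hS1u : S1 u = w₁ := by
      rw [hu, hf1, hfc2, hfc3, add_assoc, CharTwo.add_self_eq_zero, add_zero]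
    rcases hcond with ⟨hw0, hw1⟩ | ⟨hw0, htr⟩
    · rintro (⟨-, h1⟩ | ⟨h0, -⟩)
      · exact hw1 (by rw [← hS1u, h1])
      · exact h0 (by rw [hS0u, hw0])
    · rintro (⟨h0, -⟩ | ⟨-, hex⟩)
      · exact hw0 (by rw [← hS0u, h0])
      · rw [hS0u, hS1u] at hex
        rw [cover_iff_trace θ hθ w₀ w₁ hw0] at hex
        rw [htr] at hex
        exact one_ne_zero hex
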